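/- The cosine matrix of type IV of size n is orthogonal and symmetric, i.e., C_n^IV = (C_n^IV)^T and C_n^IV (C_n^IV)^T = I_n. -/

import Mathlib

open Matrix

/-- The cosine matrix of type II of size `n`. -/
noncomputable def CII (n : ℕ) : Matrix (Fin n) (Fin n) ℝ :=
  Matrix.of fun k l : Fin n =>
    Real.sqrt (2 / (n : ℝ)) * (if (k : ℕ) % n = 0 then 1 / Real.sqrt 2 else 1) *
      Real.cos ((k : ℕ) * (2 * (l : ℕ) + 1) * Real.pi / (2 * (n : ℝ)))

/-- The cosine matrix of type IV of size `n`. -/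
noncomputable def CIV (n : ℕ) : Matrix (Fin n) (Fin n) ℝ :=
  Matrix.of fun k l : Fin n =>
    Real.sqrt (2 / (n : ℝ)) *
      Real.cos ((2 * (k : ℕ) + 1) * (2 * (l : ℕ) + 1) * Real.pi / (4 * (n : ℝ)))


lemma tele_sin (θ : ℝ) (n : ℕ) :
    ∑ j ∈ Finset.range n, 2 * Real.sin θ * Real.cos ((2*(j:ℝ)+1)*θ)
      = Real.sin (2*(n:ℝ)*θ) := by
  induction n with
  | zero => simp
  | succ n ih =>
    rw [Finset.sum_range_succ, ih]
    push_cast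
    have h1 : Real.sin (2*((n:ℝ)+1)*θ) = Real.sin ((2*(n:ℝ)+1)*θ + θ) := by ring_nf
    have h2 : Real.sin (2*(n:ℝ)*θ) = Real.sin ((2*(n:ℝ)+1)*θ - θ) := by ring_nf
    rw [h1, h2, Real.sin_add, Real.sin_sub]
    ring

lemma sum_cos_zero (n : ℕ) (θ : ℝ) (h1 : Real.sin θ ≠ 0)
    (h2 : Real.sin (2*(n:ℝ)*θ) = 0) :
    ∑ j ∈ Finset.range n, Real.cos ((2*(j:ℝ)+1)*θ) = 0 := by
  have ht := tele_sin θ n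
  rw [h2, ← Finset.mul_sum] at ht
  have h2s : (2 : ℝ) * Real.sin θ ≠ 0 := by simp [h1]
  exact (mul_eq_zero.mp ht).resolve_left h2s

lemma sum_cos_int (n : ℕ) (hn : 0 < n) (m : ℤ) (hm0 : m ≠ 0) (hm : |m| < 2*n) :
    ∑ j ∈ Finset.range n, Real.cos ((m:ℝ)*(2*(j:ℝ)+1)*Real.pi/(2*(n:ℝ))) = 0 := by
  have hn' : (n:ℝ) ≠ 0 := Nat.cast_ne_zero.mpr hn.ne'
  have key : ∀ j : ℕ, (m:ℝ)*(2*(j:ℝ)+1)*Real.pi/(2*(n:ℝ))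
      = (2*(j:ℝ)+1)*((m:ℝ)*Real.pi/(2*(n:ℝ))) := by
    intro j; field_simp
  have h2 : Real.sin (2*(n:ℝ)*((m:ℝ)*Real.pi/(2*(n:ℝ)))) = 0 := by
    have he : 2*(n:ℝ)*((m:ℝ)*Real.pi/(2*(n:ℝ))) = m * Real.pi := by field_simp
    rw [he]; exact Real.sin_int_mul_pi m
  have h1 : Real.sin ((m:ℝ)*Real.pi/(2*(n:ℝ))) ≠ 0 := by
    intro h
    rcases Real.sin_eq_zero_iff.mp h with ⟨k, hk⟩
    have hpi := Real.pi_ne_zero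
    have hk2 : (2*(n:ℝ)*(k:ℝ)) * Real.pi = (m:ℝ) * Real.pi := by
      field_simp at hk
      linear_combination Real.pi * hk
    have hmk : (m:ℝ) = 2*(n:ℝ)*(k:ℝ) := (mul_right_cancel₀ hpi hk2).symm
    have hmk' : m = 2*(n:ℤ)*k := by exact_mod_cast hmk
    have hk0 : k ≠ 0 := by
      rintro rfl; simp at hmk'; exact hm0 hmk'
    have h1k : (1:ℤ) ≤ |k| := Int.one_le_abs hk0
    have h2n : (0:ℤ) < 2*(n:ℤ) := by positivity
    have hge : (2*(n:ℤ)) ≤ |m| := by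
      rw [hmk', abs_mul, abs_of_pos h2n]
      nlinarith
    linarith
  calc ∑ j ∈ Finset.range n, Real.cos ((m:ℝ)*(2*(j:ℝ)+1)*Real.pi/(2*(n:ℝ)))
      = ∑ j ∈ Finset.range n, Real.cos ((2*(j:ℝ)+1)*((m:ℝ)*Real.pi/(2*(n:ℝ)))) :=
        Finset.sum_congr rfl fun j _ => by rw [key j]
    _ = 0 := sum_cos_zero n _ h1 h2

theorem CIV_symm_and_orthogonal (n : ℕ) (hn : 0 < n) :
    CIV n = (CIV n)ᵀ ∧ CIV n * (CIV n)ᵀ = 1 := by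
  have hn' : (n:ℝ) ≠ 0 := Nat.cast_ne_zero.mpr hn.ne'
  constructor
  · ext k l
    simp only [CIV, Matrix.transpose_apply, Matrix.of_apply]
    ring_nf
  · ext k l
    rw [Matrix.mul_apply]
    simp only [CIV, Matrix.transpose_apply, Matrix.of_apply, Matrix.one_apply]
    have hsq : Real.sqrt (2/(n:ℝ)) * Real.sqrt (2/(n:ℝ)) = 2/(n:ℝ) :=
      Real.mul_self_sqrt (by positivity)
    have hterm : ∀ j : Fin n,
        (Real.sqrt (2/(n:ℝ)) * Real.cos ((2*((k:ℕ):ℝ)+1)*(2*((j:ℕ):ℝ)+1)*Real.pi/(4*(n:ℝ)))) *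
        (Real.sqrt (2/(n:ℝ)) * Real.cos ((2*((l:ℕ):ℝ)+1)*(2*((j:ℕ):ℝ)+1)*Real.pi/(4*(n:ℝ))))
        = (1/(n:ℝ)) * (Real.cos (((((k:ℤ)-(l:ℤ)):ℤ):ℝ)*(2*((j:ℕ):ℝ)+1)*Real.pi/(2*(n:ℝ)))
            + Real.cos (((((k:ℤ)+(l:ℤ)+1):ℤ):ℝ)*(2*((j:ℕ):ℝ)+1)*Real.pi/(2*(n:ℝ)))) := by
      intro j
      set A := (2*((k:ℕ):ℝ)+1)*(2*((j:ℕ):ℝ)+1)*Real.pi/(4*(n:ℝ)) with hA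
      set B := (2*((l:ℕ):ℝ)+1)*(2*((j:ℕ):ℝ)+1)*Real.pi/(4*(n:ℝ)) with hB
      have hD : (((((k:ℤ)-(l:ℤ)):ℤ):ℝ)*(2*((j:ℕ):ℝ)+1)*Real.pi/(2*(n:ℝ))) = A - B := by
        rw [hA, hB]; push_cast; field_simp; ring
      have hS : (((((k:ℤ)+(l:ℤ)+1):ℤ):ℝ)*(2*((j:ℕ):ℝ)+1)*Real.pi/(2*(n:ℝ))) = A + B := by
        rw [hA, hB]; push_cast; field_simp; ring
      rw [hD, hS, Real.cos_sub, Real.cos_add]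
      linear_combination (Real.cos A * Real.cos B) * hsq
    simp only [hterm]
    rw [← Finset.mul_sum]
    rw [Finset.sum_add_distrib]
    rw [Fin.sum_univ_eq_sum_range
      (fun j : ℕ => Real.cos (((((k:ℤ)-(l:ℤ)):ℤ):ℝ)*(2*(j:ℝ)+1)*Real.pi/(2*(n:ℝ)))) n]
    rw [Fin.sum_univ_eq_sum_range
      (fun j : ℕ => Real.cos (((((k:ℤ)+(l:ℤ)+1):ℤ):ℝ)*(2*(j:ℝ)+1)*Real.pi/(2*(n:ℝ)))) n]
    have hk := k.isLt
    have hl := l.isLt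
    have hS0 : ∑ j ∈ Finset.range n,
        Real.cos (((((k:ℤ)+(l:ℤ)+1):ℤ):ℝ)*(2*(j:ℝ)+1)*Real.pi/(2*(n:ℝ))) = 0 := by
      apply sum_cos_int n hn _ (by positivity)
      rw [abs_of_pos (by positivity)]
      push_cast
      omega
    rw [hS0]
    by_cases hkl : k = l
    · subst hkl
      simp only [sub_self, if_pos rfl]
      have : ∀ j ∈ Finset.range n,
          Real.cos ((((0:ℤ)):ℝ)*(2*(j:ℝ)+1)*Real.pi/(2*(n:ℝ))) = 1 := by
        intro j _; norm_num
      rw [Finset.sum_congr rfl this, Finset.sum_const, Finset.card_range]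
      field_simp
      simp
    · rw [if_neg hkl]
      have hD0 : ∑ j ∈ Finset.range n,
          Real.cos (((((k:ℤ)-(l:ℤ)):ℤ):ℝ)*(2*(j:ℝ)+1)*Real.pi/(2*(n:ℝ))) = 0 := by
        apply sum_cos_int n hn
        · intro h
          apply hkl
          apply Fin.ext
          omega
        · rw [abs_lt]
          constructor <;> push_cast <;> omega
      rw [hD0]
      ring
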